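/- Let X be a nonempty set and let φ : X × [0, +∞) → ℝ be a function such that for each x ∈ X the function λ ↦ φ(x, λ) is continuous on [0, +∞). If sup_{λ > 0} inf_{x ∈ X} φ(x, λ) = inf_{x ∈ X} sup_{λ > 0} φ(x, λ), then sup_{λ ≥ 0} inf_{x ∈ X} φ(x, λ) = inf_{x ∈ X} sup_{λ ≥ 0} φ(x, λ), where all suprema and infima are taken in the extended real numbers. -/

import Mathlib

open Filter Set

/-- If `φ : X × [0,∞) → ℝ` is continuous in the second variable and
`sup_{λ>0} inf_x φ(x,λ) = inf_x sup_{λ>0} φ(x,λ)`, then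
`sup_{λ≥0} inf_x φ(x,λ) = inf_x sup_{λ≥0} φ(x,λ)` (in the extended reals). -/
theorem stmt7 {X : Type*} [Nonempty X] (φ : X → ℝ → ℝ)
    (hc : ∀ x : X, ContinuousOn (φ x) (Set.Ici 0))
    (h : (⨆ l ∈ Set.Ioi (0 : ℝ), ⨅ x : X, (φ x l : EReal)) =
         ⨅ x : X, ⨆ l ∈ Set.Ioi (0 : ℝ), (φ x l : EReal)) :
    (⨆ l ∈ Set.Ici (0 : ℝ), ⨅ x : X, (φ x l : EReal)) =
      ⨅ x : X, ⨆ l ∈ Set.Ici (0 : ℝ), (φ x l : EReal) := by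
  -- For each x, sup over Ici equals sup over Ioi, by continuity at 0.
  have key : ∀ x : X, (⨆ l ∈ Set.Ici (0 : ℝ), (φ x l : EReal))
      = ⨆ l ∈ Set.Ioi (0 : ℝ), (φ x l : EReal) := by
    intro x
    apply le_antisymm
    · refine iSup₂_le fun l hl => ?_
      rcases lt_or_eq_of_le (Set.mem_Ici.mp hl) with hl' | hl'
      · exact le_iSup₂ (f := fun l _ => (φ x l : EReal)) l (Set.mem_Ioi.mpr hl')
      · subst hl'
        have ht : Tendsto (fun l => (φ x l : EReal)) (nhdsWithin 0 (Set.Ioi 0))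
            (nhds (φ x 0 : EReal)) := by
          have h1 : ContinuousWithinAt (φ x) (Set.Ioi 0) 0 :=
            (hc x 0 Set.self_mem_Ici).mono Set.Ioi_subset_Ici_self
          exact (continuous_coe_real_ereal.continuousAt).tendsto.comp h1
        refine le_of_tendsto ht ?_
        filter_upwards [self_mem_nhdsWithin] with l hl
        exact le_iSup₂ (f := fun l _ => (φ x l : EReal)) l hl
    · exact iSup₂_le fun l hl => le_iSup₂ (f := fun l _ => (φ x l : EReal)) l (Set.mem_Ici.mpr (le_of_lt (Set.mem_Ioi.mp hl)))
  apply le_antisymm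
  · -- minimax inequality always holds
    refine iSup₂_le fun l hl => le_iInf fun x => ?_
    exact (iInf_le _ x).trans (le_iSup₂ (f := fun l _ => (φ x l : EReal)) l hl)
  · calc ⨅ x : X, ⨆ l ∈ Set.Ici (0 : ℝ), (φ x l : EReal)
        = ⨅ x : X, ⨆ l ∈ Set.Ioi (0 : ℝ), (φ x l : EReal) := by
          exact iInf_congr key
      _ = ⨆ l ∈ Set.Ioi (0 : ℝ), ⨅ x : X, (φ x l : EReal) := h.symm
      _ ≤ ⨆ l ∈ Set.Ici (0 : ℝ), ⨅ x : X, (φ x l : EReal) := by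
          exact iSup₂_le fun l hl =>
            le_iSup₂ (f := fun l _ => ⨅ x : X, (φ x l : EReal)) l (Set.mem_Ici.mpr (le_of_lt (Set.mem_Ioi.mp hl)))
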